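/- Let d ≥ 1, let R be a Borel probability measure on (ℝ^d × ℝ^d) × (ℝ^d × ℝ^d), and let R^X denote the pushforward of R under the map ((x₁,v₁),(x₂,v₂)) ↦ (x₁,x₂). Let μ, ν be Borel probability measures on ℝ^d. (i) For every q ∈ Π_X(μ,ν), writing q^X for the pushforward of q under ((x₁,v₁),(x₂,v₂)) ↦ (x₁,x₂), one has H(q|R) ≥ H(q^X|R^X). (ii) If π ∈ Π(μ,ν) is a coupling of μ and ν on ℝ^d × ℝ^d with π ≪ R^X, then the measure μ^T defined by dμ^T/dR((x₁,v₁),(x₂,v₂)) = (dπ/dR^X)(x₁,x₂) is a probability measure belonging to Π_X(μ,ν), its pushforward under ((x₁,v₁),(x₂,v₂)) ↦ (x₁,x₂) equals π, and H(μ^T|R) = H(π|R^X). Consequently, inf { H(q|R) : q ∈ Π_X(μ,ν) } = inf { H(π|R^X) : π ∈ Π(μ,ν) }. -/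

import Mathlib

open MeasureTheory Filter Topology

/- Relative entropy `H(P|Q)`: `∫ log (dP/dQ) dP` if `P ≪ Q` (and the integral makes
sense), and `+∞` otherwise. -/
open Classical in
noncomputable def relEntropy {α : Type*} [MeasurableSpace α] (P Q : Measure α) : EReal :=
  if P ≪ Q ∧ Integrable (llr P Q) P then ((∫ x, llr P Q x ∂P : ℝ) : EReal) else ⊤

/-- The set of couplings `Π(μ,ν)`: probability measures on `α × α` with first marginal `μ`
and second marginal `ν`. -/
def couplings {α : Type*} [MeasurableSpace α] (μ ν : Measure α) : Set (Measure (α × α)) :=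
  {p | IsProbabilityMeasure p ∧ p.map Prod.fst = μ ∧ p.map Prod.snd = ν}

/-- The set `Π_X(μ,ν)`: probability measures on `(α × α) × (α × α)`
(points `((x₁,v₁),(x₂,v₂))`) whose pushforwards under `((x₁,v₁),(x₂,v₂)) ↦ x₁` and
`((x₁,v₁),(x₂,v₂)) ↦ x₂` are `μ` and `ν` respectively. -/
def PiX {α : Type*} [MeasurableSpace α] (μ ν : Measure α) :
    Set (Measure ((α × α) × (α × α))) :=
  {p | IsProbabilityMeasure p ∧ p.map (fun z => z.1.1) = μ ∧ p.map (fun z => z.2.1) = ν}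

section Aux

open Real MeasureTheory ENNReal

variable {α β : Type*} [MeasurableSpace α] [MeasurableSpace β]

/-- Pushforward of the lift equals the original measure. -/
lemma lift_map (R : Measure α) [IsProbabilityMeasure R] {T : α → β} (hT : Measurable T)
    (p : Measure β) [IsProbabilityMeasure p] (hp : p ≪ R.map T) :
    (R.withDensity (fun x => p.rnDeriv (R.map T) (T x))).map T = p := by
  haveI : IsProbabilityMeasure (R.map T) := Measure.isProbabilityMeasure_map hT.aemeasurable
  have hg : Measurable (p.rnDeriv (R.map T)) := Measure.measurable_rnDeriv _ _
  ext s hs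
  rw [Measure.map_apply hT hs, withDensity_apply _ (hT hs),
    ← setLIntegral_map hs hg hT, Measure.setLIntegral_rnDeriv hp s]

lemma lift_prob (R : Measure α) [IsProbabilityMeasure R] {T : α → β} (hT : Measurable T)
    (p : Measure β) [IsProbabilityMeasure p] (hp : p ≪ R.map T) :
    IsProbabilityMeasure (R.withDensity (fun x => p.rnDeriv (R.map T) (T x))) := by
  constructor
  have h := congrArg (fun m : Measure β => m Set.univ) (lift_map R hT p hp)
  simpa [Measure.map_apply hT MeasurableSet.univ] using h

lemma lift_rnDeriv (R : Measure α) [IsProbabilityMeasure R] {T : α → β} (hT : Measurable T)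
    (p : Measure β) [IsProbabilityMeasure p] :
    (R.withDensity (fun x => p.rnDeriv (R.map T) (T x))).rnDeriv R
      =ᵐ[R] fun x => p.rnDeriv (R.map T) (T x) :=
  Measure.rnDeriv_withDensity R ((Measure.measurable_rnDeriv _ _).comp hT)

lemma lift_llr (R : Measure α) [IsProbabilityMeasure R] {T : α → β} (hT : Measurable T)
    (p : Measure β) [IsProbabilityMeasure p] :
    llr (R.withDensity (fun x => p.rnDeriv (R.map T) (T x))) R
      =ᵐ[R] fun x => llr p (R.map T) (T x) := by
  filter_upwards [lift_rnDeriv R hT p] with x hx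
  rw [llr, hx, llr]

lemma lift_relEntropy (R : Measure α) [IsProbabilityMeasure R] {T : α → β} (hT : Measurable T)
    (p : Measure β) [IsProbabilityMeasure p] (hp : p ≪ R.map T) :
    relEntropy (R.withDensity (fun x => p.rnDeriv (R.map T) (T x))) R
      = relEntropy p (R.map T) := by
  haveI : IsProbabilityMeasure (R.map T) := Measure.isProbabilityMeasure_map hT.aemeasurable
  set m := R.withDensity (fun x => p.rnDeriv (R.map T) (T x)) with hm_def
  haveI : IsProbabilityMeasure m := lift_prob R hT p hp
  have hmR : m ≪ R := withDensity_absolutelyContinuous _ _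
  have h_llr : llr m R =ᵐ[m] fun x => llr p (R.map T) (T x) := hmR.ae_le (lift_llr R hT p)
  have h_int : Integrable (llr m R) m ↔ Integrable (llr p (R.map T)) p := by
    rw [integrable_congr h_llr, ← lift_map R hT p hp,
      integrable_map_measure (measurable_llr _ _).aestronglyMeasurable hT.aemeasurable]
    rfl
  by_cases hI : Integrable (llr p (R.map T)) p
  · have hI' : Integrable (llr m R) m := h_int.mpr hI
    rw [relEntropy, if_pos ⟨hmR, hI'⟩, relEntropy, if_pos ⟨hp, hI⟩]
    have : ∫ x, llr m R x ∂m = ∫ x, llr p (R.map T) (T x) ∂m := integral_congr_ae h_llr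
    rw [this]
    rw [show (∫ x, llr p (R.map T) (T x) ∂m) = ∫ y, llr p (R.map T) y ∂(m.map T) from
      (integral_map hT.aemeasurable (measurable_llr _ _).aestronglyMeasurable).symm,
      lift_map R hT p hp]
  · rw [relEntropy, if_neg (fun h => hI (h_int.mp h.2)), relEntropy,
      if_neg (fun h => hI h.2)]

/-- Gibbs' inequality: the relative entropy integral is nonnegative. -/
lemma integral_llr_nonneg' (q m : Measure α) [IsProbabilityMeasure q] [IsProbabilityMeasure m]
    (hqm : q ≪ m) (hint : Integrable (llr q m) q) : 0 ≤ ∫ x, llr q m x ∂q := by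
  have h_exp_eq : (fun x => exp (- llr q m x)) =ᵐ[q] fun x => (m.rnDeriv q x).toReal :=
    exp_neg_llr hqm
  have h_exp_int : Integrable (fun x => exp (- llr q m x)) q := by
    refine Integrable.congr ?_ h_exp_eq.symm
    exact integrable_toReal_of_lintegral_ne_top
      (Measure.measurable_rnDeriv _ _).aemeasurable
      (Measure.lintegral_rnDeriv_lt_top m q).ne
  have h_jensen : exp (∫ x, - llr q m x ∂q) ≤ ∫ x, exp (- llr q m x) ∂q := by
    have hconv : ConvexOn ℝ Set.univ exp := convexOn_exp
    exact hconv.map_integral_le continuous_exp.continuousOn isClosed_univ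
      (Filter.Eventually.of_forall fun x => Set.mem_univ _) hint.neg h_exp_int
  have h_le_one : ∫ x, exp (- llr q m x) ∂q ≤ 1 := by
    rw [integral_congr_ae h_exp_eq]
    calc ∫ x, (m.rnDeriv q x).toReal ∂q
        = ∫ x in Set.univ, (m.rnDeriv q x).toReal ∂q := setIntegral_univ.symm
      _ ≤ (m Set.univ).toReal := Measure.setIntegral_toReal_rnDeriv_le (measure_ne_top m _)
      _ = 1 := by simp
  have := h_jensen.trans h_le_one
  rw [exp_le_one_iff, integral_neg, neg_nonpos] at this
  exact this

/-- Data-processing inequality for `relEntropy`. -/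
lemma relEntropy_map_le (q R : Measure α) [IsProbabilityMeasure q] [IsProbabilityMeasure R]
    {T : α → β} (hT : Measurable T) :
    relEntropy (q.map T) (R.map T) ≤ relEntropy q R := by
  by_cases hcond : q ≪ R ∧ Integrable (llr q R) q
  swap
  · have h : relEntropy q R = ⊤ := by unfold relEntropy; exact if_neg hcond
    rw [h]; exact le_top
  obtain ⟨hqR, hint⟩ := hcond
  haveI : IsProbabilityMeasure (q.map T) := Measure.isProbabilityMeasure_map hT.aemeasurable
  haveI : IsProbabilityMeasure (R.map T) := Measure.isProbabilityMeasure_map hT.aemeasurable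
  have hqt : q.map T ≪ R.map T := hqR.map hT
  set g : β → ENNReal := (q.map T).rnDeriv (R.map T) with hg_def
  have hg : Measurable g := Measure.measurable_rnDeriv _ _
  set m := R.withDensity (fun x => g (T x)) with hm_def
  haveI : IsProbabilityMeasure m := lift_prob R hT (q.map T) hqt
  have hmR : m ≪ R := withDensity_absolutelyContinuous _ _
  have hmap : m.map T = q.map T := lift_map R hT (q.map T) hqt
  have h_rn : m.rnDeriv R =ᵐ[R] fun x => g (T x) := lift_rnDeriv R hT (q.map T)
  have h_llr_R : llr m R =ᵐ[R] fun x => llr (q.map T) (R.map T) (T x) := lift_llr R hT (q.map T)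
  -- q gives no mass where g ∘ T vanishes
  have h0 : q {x | g (T x) = 0} = 0 := by
    have hs : MeasurableSet {y | g y = 0} := hg (measurableSet_singleton 0)
    have : q {x | g (T x) = 0} = (q.map T) {y | g y = 0} := by
      rw [Measure.map_apply hT hs]; rfl
    rw [this, ← Measure.setLIntegral_rnDeriv hqt {y | g y = 0}]
    rw [setLIntegral_congr_fun hs (fun y hy => hy)]
    simp
  have htop : q {x | g (T x) = ∞} = 0 := by
    have hs : MeasurableSet {y | g y = ∞} := hg (measurableSet_singleton ∞)
    have h1 : (R.map T) {y | g y = ∞} = 0 := by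
      have := Measure.rnDeriv_lt_top (q.map T) (R.map T)
      rw [← hg_def] at this
      simpa [ae_iff] using this
    have : q {x | g (T x) = ∞} = (q.map T) {y | g y = ∞} := by
      rw [Measure.map_apply hT hs]; rfl
    rw [this]
    exact hqt h1
  -- q ≪ m
  have hqm : q ≪ m := by
    refine Measure.AbsolutelyContinuous.mk fun s hs hms => ?_
    rw [hm_def, withDensity_apply _ hs] at hms
    have hmeas : Measurable fun x => g (T x) := hg.comp hT
    rw [lintegral_eq_zero_iff hmeas] at hms
    have hR0 : R (s ∩ {x | g (T x) ≠ 0}) = 0 := by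
      have hms' : ∀ᵐ x ∂(R.restrict s), g (T x) = 0 := hms
      rw [ae_iff] at hms'
      have h' : R.restrict s {x | g (T x) ≠ 0} = 0 := by simpa using hms'
      have hset : MeasurableSet {x | g (T x) ≠ 0} :=
        (hmeas (measurableSet_singleton 0)).compl
      rwa [Measure.restrict_apply hset, Set.inter_comm] at h'
    have hq1 : q (s ∩ {x | g (T x) ≠ 0}) = 0 := hqR hR0
    have hq2 : q (s ∩ {x | g (T x) = 0}) = 0 :=
      measure_mono_null (Set.inter_subset_right) h0
    have : s ⊆ (s ∩ {x | g (T x) ≠ 0}) ∪ (s ∩ {x | g (T x) = 0}) := by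
      intro x hx
      by_cases hgx : g (T x) = 0
      · exact Or.inr ⟨hx, hgx⟩
      · exact Or.inl ⟨hx, hgx⟩
    exact measure_mono_null this (by rw [measure_union_null_iff]; exact ⟨hq1, hq2⟩)
  -- chain rule a.e. q
  have h_chain : llr q R =ᵐ[q] fun x => llr q m x + llr m R x := by
    have hmul : q.rnDeriv m * m.rnDeriv R =ᵐ[q] q.rnDeriv R :=
      hqR.ae_le (Measure.rnDeriv_mul_rnDeriv hqm)
    have hpos : ∀ᵐ x ∂q, 0 < q.rnDeriv m x := Measure.rnDeriv_pos hqm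
    have hfin : ∀ᵐ x ∂q, q.rnDeriv m x < ∞ := hqm.ae_le (Measure.rnDeriv_lt_top q m)
    have hb_eq : ∀ᵐ x ∂q, m.rnDeriv R x = g (T x) := hqR.ae_le h_rn
    have hb_ne : ∀ᵐ x ∂q, g (T x) ≠ 0 := by
      rw [ae_iff]; simpa using h0
    have hb_fin : ∀ᵐ x ∂q, g (T x) ≠ ∞ := by
      rw [ae_iff]; simpa using htop
    filter_upwards [hmul, hpos, hfin, hb_eq, hb_ne, hb_fin] with x hmul hpos hfin hbeq hbne hbfin
    rw [llr, ← hmul, Pi.mul_apply, ENNReal.toReal_mul, llr, llr, hbeq]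
    rw [Real.log_mul]
    · exact (ENNReal.toReal_ne_zero.mpr ⟨hpos.ne', hfin.ne⟩)
    · exact (ENNReal.toReal_ne_zero.mpr ⟨hbne, hbfin⟩)
  have h_llr_q : llr m R =ᵐ[q] fun x => llr (q.map T) (R.map T) (T x) := hqR.ae_le h_llr_R
  -- integrability of exp(-llr q m) wrt q
  have h_exp_int : Integrable (fun x => exp (- llr q m x)) q := by
    refine Integrable.congr ?_ (exp_neg_llr hqm).symm
    exact integrable_toReal_of_lintegral_ne_top (Measure.measurable_rnDeriv _ _).aemeasurable
      (Measure.lintegral_rnDeriv_lt_top m q).ne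
  -- Integrability of llr (q.map T) (R.map T) wrt q.map T
  set f : β → ℝ := llr (q.map T) (R.map T) with hf_def
  have hf_meas : Measurable f := measurable_llr _ _
  have h_pos_q : Integrable (fun x => max (f (T x)) 0) q := by
    set B : α → ℝ := fun x => |llr q R x| + exp (- llr q m x) with hB_def
    have hB_int : Integrable B q := hint.abs.add h_exp_int
    refine Integrable.mono' hB_int ((hf_meas.comp hT).max measurable_const).aestronglyMeasurable ?_
    filter_upwards [h_chain, h_llr_q] with x hchain hllrq
    rw [Real.norm_eq_abs, abs_of_nonneg (le_max_right _ _)]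
    have h1 : f (T x) = llr q R x - llr q m x := by
      rw [← hllrq]; rw [hchain]; ring
    have h2 : - llr q m x ≤ exp (- llr q m x) :=
      le_trans (by linarith [Real.add_one_le_exp (- llr q m x)]) le_rfl
    have h3 : f (T x) ≤ |llr q R x| + exp (- llr q m x) := by
      rw [h1]
      have := Real.add_one_le_exp (- llr q m x)
      have hle : llr q R x ≤ |llr q R x| := le_abs_self _
      linarith
    have h4 : (0:ℝ) ≤ |llr q R x| + exp (- llr q m x) :=
      add_nonneg (abs_nonneg _) (Real.exp_pos _).le
    exact max_le h3 h4
  have h_pos : Integrable (fun y => max (f y) 0) (q.map T) := by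
    rw [integrable_map_measure (hf_meas.max measurable_const).aestronglyMeasurable
      hT.aemeasurable]
    exact h_pos_q
  have h_neg : Integrable (fun y => max (- f y) 0) (q.map T) := by
    have h_exp_eq : (fun y => exp (- f y)) =ᵐ[q.map T]
        fun y => ((R.map T).rnDeriv (q.map T) y).toReal := exp_neg_llr hqt
    have h_exp_int' : Integrable (fun y => exp (- f y)) (q.map T) := by
      refine Integrable.congr ?_ h_exp_eq.symm
      exact integrable_toReal_of_lintegral_ne_top (Measure.measurable_rnDeriv _ _).aemeasurable
        (Measure.lintegral_rnDeriv_lt_top _ _).ne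
    refine Integrable.mono' h_exp_int'
      ((hf_meas.neg.max measurable_const)).aestronglyMeasurable ?_
    refine Filter.Eventually.of_forall fun y => ?_
    rw [Real.norm_eq_abs, abs_of_nonneg (le_max_right _ _)]
    have := Real.add_one_le_exp (- f y)
    exact max_le (by linarith) (Real.exp_pos _).le
  have hI_qT : Integrable f (q.map T) := by
    have : f = (fun y => max (f y) 0) - fun y => max (- f y) 0 := by
      funext y; simp [max_zero_sub_max_neg_zero_eq_self]
    rw [this]
    exact h_pos.sub h_neg
  -- transfer integrability back to q, for llr m R
  have hI_comp : Integrable (f ∘ T) q := by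
    rw [← integrable_map_measure hf_meas.aestronglyMeasurable hT.aemeasurable]
    exact hI_qT
  have hI_mR : Integrable (llr m R) q := hI_comp.congr h_llr_q.symm
  -- integrability of llr q m
  have hI_qm : Integrable (llr q m) q := by
    refine (hint.sub hI_mR).congr ?_
    filter_upwards [h_chain] with x hx
    simp only [Pi.sub_apply]
    rw [hx]; ring
  -- Gibbs
  have h_gibbs : 0 ≤ ∫ x, llr q m x ∂q := integral_llr_nonneg' q m hqm hI_qm
  -- compute
  have h_int_eq : ∫ y, f y ∂(q.map T) = ∫ x, llr m R x ∂q := by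
    rw [integral_map hT.aemeasurable hf_meas.aestronglyMeasurable]
    exact integral_congr_ae h_llr_q.symm
  have h_sum : ∫ x, llr q R x ∂q = ∫ x, llr q m x ∂q + ∫ x, llr m R x ∂q := by
    rw [← integral_add hI_qm hI_mR]
    exact integral_congr_ae h_chain
  have h_le : ∫ y, f y ∂(q.map T) ≤ ∫ x, llr q R x ∂q := by
    rw [h_int_eq, h_sum]; linarith
  rw [relEntropy, if_pos ⟨hqt, hI_qT⟩, relEntropy, if_pos ⟨hqR, hint⟩]
  exact_mod_cast EReal.coe_le_coe_iff.mpr h_le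

end Aux


section Main

open MeasureTheory

lemma lift_mem_PiX {α : Type*} [MeasurableSpace α]
    (R : Measure ((α × α) × (α × α))) [IsProbabilityMeasure R]
    (μ ν : Measure α) (p : Measure (α × α)) [IsProbabilityMeasure p]
    (hp : p ∈ couplings μ ν) (hac : p ≪ R.map (fun z => (z.1.1, z.2.1))) :
    R.withDensity (fun z => p.rnDeriv (R.map (fun z => (z.1.1, z.2.1))) (z.1.1, z.2.1))
      ∈ PiX μ ν := by
  have hT : Measurable (fun z : (α × α) × (α × α) => (z.1.1, z.2.1)) :=
    (measurable_fst.fst).prodMk (measurable_snd.fst)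
  refine ⟨lift_prob R hT p hac, ?_, ?_⟩
  · have h1 : (R.withDensity
        (fun z => p.rnDeriv (R.map (fun z => (z.1.1, z.2.1))) (z.1.1, z.2.1))).map
          (fun z => z.1.1)
        = ((R.withDensity
        (fun z => p.rnDeriv (R.map (fun z => (z.1.1, z.2.1))) (z.1.1, z.2.1))).map
          (fun z => (z.1.1, z.2.1))).map Prod.fst := by
      rw [Measure.map_map measurable_fst hT]; rfl
    rw [h1, lift_map R hT p hac, hp.2.1]
  · have h1 : (R.withDensity
        (fun z => p.rnDeriv (R.map (fun z => (z.1.1, z.2.1))) (z.1.1, z.2.1))).map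
          (fun z => z.2.1)
        = ((R.withDensity
        (fun z => p.rnDeriv (R.map (fun z => (z.1.1, z.2.1))) (z.1.1, z.2.1))).map
          (fun z => (z.1.1, z.2.1))).map Prod.snd := by
      rw [Measure.map_map measurable_snd hT]; rfl
    rw [h1, lift_map R hT p hac, hp.2.2]

end Main

/-- reduction of the kinetic Schrödinger problem to a static entropy
minimization over spatial couplings. -/
theorem kinetic_schrodinger_reduction
    (d : ℕ) (hd : 1 ≤ d)
    (R : Measure ((EuclideanSpace ℝ (Fin d) × EuclideanSpace ℝ (Fin d)) ×
      (EuclideanSpace ℝ (Fin d) × EuclideanSpace ℝ (Fin d))))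
    [IsProbabilityMeasure R]
    (μ ν : Measure (EuclideanSpace ℝ (Fin d)))
    [IsProbabilityMeasure μ] [IsProbabilityMeasure ν] :
    (∀ q ∈ PiX μ ν,
      relEntropy (q.map (fun z => (z.1.1, z.2.1))) (R.map (fun z => (z.1.1, z.2.1)))
        ≤ relEntropy q R) ∧
    (∀ p ∈ couplings μ ν, p ≪ R.map (fun z => (z.1.1, z.2.1)) →
      IsProbabilityMeasure
        (R.withDensity (fun z => p.rnDeriv (R.map (fun z => (z.1.1, z.2.1))) (z.1.1, z.2.1))) ∧
      R.withDensity (fun z => p.rnDeriv (R.map (fun z => (z.1.1, z.2.1))) (z.1.1, z.2.1))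
        ∈ PiX μ ν ∧
      (R.withDensity (fun z => p.rnDeriv (R.map (fun z => (z.1.1, z.2.1))) (z.1.1, z.2.1))).map
          (fun z => (z.1.1, z.2.1)) = p ∧
      relEntropy
        (R.withDensity (fun z => p.rnDeriv (R.map (fun z => (z.1.1, z.2.1))) (z.1.1, z.2.1))) R
        = relEntropy p (R.map (fun z => (z.1.1, z.2.1)))) ∧
    (⨅ q ∈ PiX μ ν, relEntropy q R)
      = ⨅ p ∈ couplings μ ν, relEntropy p (R.map (fun z => (z.1.1, z.2.1))) := by
  set E := EuclideanSpace ℝ (Fin d)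
  have hT : Measurable (fun z : (E × E) × (E × E) => (z.1.1, z.2.1)) :=
    (measurable_fst.fst).prodMk (measurable_snd.fst)
  refine ⟨?_, ?_, ?_⟩
  · intro q hq
    haveI := hq.1
    exact relEntropy_map_le q R hT
  · intro p hp hac
    haveI := hp.1
    exact ⟨lift_prob R hT p hac, lift_mem_PiX R μ ν p hp hac, lift_map R hT p hac,
      lift_relEntropy R hT p hac⟩
  · apply le_antisymm
    · refine le_iInf₂ fun p hp => ?_
      haveI := hp.1
      by_cases hac : p ≪ R.map (fun z => (z.1.1, z.2.1))
      · calc (⨅ q ∈ PiX μ ν, relEntropy q R)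
            ≤ relEntropy
              (R.withDensity
                (fun z => p.rnDeriv (R.map (fun z => (z.1.1, z.2.1))) (z.1.1, z.2.1))) R :=
            iInf₂_le _ (lift_mem_PiX R μ ν p hp hac)
          _ = relEntropy p (R.map (fun z => (z.1.1, z.2.1))) := lift_relEntropy R hT p hac
      · have h : relEntropy p (R.map (fun z => (z.1.1, z.2.1))) = ⊤ := by
          unfold relEntropy; exact if_neg (fun h => hac h.1)
        rw [h]; exact le_top
    · refine le_iInf₂ fun q hq => ?_
      haveI := hq.1
      have hqc : q.map (fun z => (z.1.1, z.2.1)) ∈ couplings μ ν := by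
        refine ⟨Measure.isProbabilityMeasure_map hT.aemeasurable, ?_, ?_⟩
        · rw [Measure.map_map measurable_fst hT]
          exact hq.2.1
        · rw [Measure.map_map measurable_snd hT]
          exact hq.2.2
      exact le_trans (iInf₂_le _ hqc) (relEntropy_map_le q R hT)
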